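/- Under the hypotheses of Theorem 1's proof (Λ linear, trace-preserving, positive, non-entangling, and λΛ(Φ₁)+(1−λ)Λ(|01⟩⟨01|) = λΦ₁+(1−λ)Φ₃ with λ ∈ (1/2,1)), it holds that tr(Φ₁Λ(|01⟩⟨01|)) = 1/2 and tr(Φ₃Λ(|01⟩⟨01|)) = 1/2. -/

import Mathlib

open Matrix Complex BigOperators
open scoped ComplexOrder

noncomputable section

/-- Standard basis ket of ℂ⁴ -/
def ket (k : Fin 4) : Fin 4 → ℂ := fun j => if j = k then 1 else 0

/-- Tensor product of two qubit vectors, with |ij⟩ ↦ index 2i+j -/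
def tens (ψ χ : Fin 2 → ℂ) : Fin 4 → ℂ :=
  ![ψ 0 * χ 0, ψ 0 * χ 1, ψ 1 * χ 0, ψ 1 * χ 1]

/-- Outer product |v⟩⟨v| -/
def proj (v : Fin 4 → ℂ) : Matrix (Fin 4) (Fin 4) ℂ :=
  Matrix.of fun i j => v i * star (v j)

/-- A qubit vector is a unit vector -/
def unit2 (ψ : Fin 2 → ℂ) : Prop := ∑ j, Complex.normSq (ψ j) = 1

/-- The four Bell vectors -/
def Bell : Fin 4 → (Fin 4 → ℂ) :=
  ![![1 / (Real.sqrt 2 : ℂ), 0, 0, 1 / (Real.sqrt 2 : ℂ)],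
    ![1 / (Real.sqrt 2 : ℂ), 0, 0, -(1 / (Real.sqrt 2 : ℂ))],
    ![0, 1 / (Real.sqrt 2 : ℂ), 1 / (Real.sqrt 2 : ℂ), 0],
    ![0, -(1 / (Real.sqrt 2 : ℂ)), 1 / (Real.sqrt 2 : ℂ), 0]]

/-- Bell projectors Φᵢ (indexed from 0: `Phi 0` is Φ₁, etc.) -/
def Phi (i : Fin 4) : Matrix (Fin 4) (Fin 4) ℂ := proj (Bell i)

/-- Separability of a two-qubit (4×4) matrix -/
def IsSepState (ρ : Matrix (Fin 4) (Fin 4) ℂ) : Prop :=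
  ∃ (n : ℕ) (p : Fin n → ℝ) (ψ χ : Fin n → Fin 2 → ℂ),
    (∀ i, 0 ≤ p i) ∧ (∑ i, p i = 1) ∧ (∀ i, unit2 (ψ i)) ∧ (∀ i, unit2 (χ i)) ∧
    ρ = ∑ i, (p i : ℂ) • proj (tens (ψ i) (χ i))

/-- Density matrix -/
def IsState (ρ : Matrix (Fin 4) (Fin 4) ℂ) : Prop := ρ.PosSemidef ∧ ρ.trace = 1

lemma trace_phi_proj (i : Fin 4) (v : Fin 4 → ℂ) :
    (Phi i * proj v).trace = ((normSq (star (Bell i) ⬝ᵥ v) : ℝ) : ℂ) := by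
  have h1 : (Phi i * proj v).trace = (star (Bell i) ⬝ᵥ v) * (star v ⬝ᵥ Bell i) := by
    simp [Matrix.trace, Matrix.mul_apply, dotProduct, Phi, proj, Fin.sum_univ_four]; ring
  have h2 : star v ⬝ᵥ Bell i = starRingEnd ℂ (star (Bell i) ⬝ᵥ v) := by
    simp [dotProduct, Fin.sum_univ_four]; ring
  rw [h1, h2, mul_comm, ← Complex.normSq_eq_conj_mul_self]

lemma bell0_dot (ψ χ : Fin 2 → ℂ) :
    star (Bell 0) ⬝ᵥ tens ψ χ = (1 / (Real.sqrt 2 : ℂ)) * (ψ 0 * χ 0 + ψ 1 * χ 1) := by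
  simp [Bell, tens, dotProduct, Fin.sum_univ_four, Complex.star_def, map_div₀, Complex.conj_ofReal]
  ring

lemma bell2_dot (ψ χ : Fin 2 → ℂ) :
    star (Bell 2) ⬝ᵥ tens ψ χ = (1 / (Real.sqrt 2 : ℂ)) * (ψ 0 * χ 1 + ψ 1 * χ 0) := by
  simp [Bell, tens, dotProduct, Fin.sum_univ_four, Complex.star_def, map_div₀, Complex.conj_ofReal]
  ring

lemma nsq_half (z : ℂ) : normSq ((1 / (Real.sqrt 2 : ℂ)) * z) = (1/2) * normSq z := by
  rw [Complex.normSq_mul]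
  congr 1
  have h : (1 / (Real.sqrt 2 : ℂ)) = ((1 / Real.sqrt 2 : ℝ) : ℂ) := by push_cast; ring
  rw [h, Complex.normSq_ofReal, div_mul_div_comm, one_mul, Real.mul_self_sqrt (by norm_num : (0:ℝ) ≤ 2)]

lemma cs (a b c d : ℂ) (h1 : normSq a + normSq b = 1) (h2 : normSq c + normSq d = 1) :
    normSq (a * c + b * d) ≤ 1 := by
  have habs : ‖a*c + b*d‖ ≤ ‖a‖ * ‖c‖ + ‖b‖ * ‖d‖ := by
    calc ‖a*c + b*d‖ ≤ ‖a*c‖ + ‖b*d‖ := norm_add_le _ _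
    _ = _ := by simp [norm_mul]
  have h3 : normSq (a*c+b*d) = (‖a*c+b*d‖)^2 := (Complex.sq_norm _).symm
  rw [h3]
  have hA := norm_nonneg (a*c+b*d)
  have ha := Complex.sq_norm a; have hb := Complex.sq_norm b
  have hc := Complex.sq_norm c; have hd := Complex.sq_norm d
  nlinarith [sq_nonneg (‖a‖ * ‖d‖ - ‖b‖ * ‖c‖),
    norm_nonneg a, norm_nonneg b, norm_nonneg c, norm_nonneg d,
    mul_nonneg (norm_nonneg a) (norm_nonneg c),
    mul_nonneg (norm_nonneg b) (norm_nonneg d)]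

lemma sep_bound (σ : Matrix (Fin 4) (Fin 4) ℂ) (h : IsSepState σ) (i : Fin 4)
    (hi : i = 0 ∨ i = 2) : (Phi i * σ).trace.re ≤ 1/2 := by
  obtain ⟨n, p, ψ, χ, hp, hps, hψ, hχ, hσ⟩ := h
  have key : ∀ k : Fin n, ∃ t : ℝ, t ≤ 1/2 ∧
      (Phi i * proj (tens (ψ k) (χ k))).trace = (t : ℂ) := by
    intro k
    have hu1 : normSq (ψ k 0) + normSq (ψ k 1) = 1 := by
      have := hψ k; simpa [unit2, Fin.sum_univ_two] using this
    have hu2 : normSq (χ k 0) + normSq (χ k 1) = 1 := by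
      have := hχ k; simpa [unit2, Fin.sum_univ_two] using this
    rcases hi with hi | hi <;> subst hi
    · refine ⟨(1/2) * normSq (ψ k 0 * χ k 0 + ψ k 1 * χ k 1), ?_, ?_⟩
      · nlinarith [cs (ψ k 0) (ψ k 1) (χ k 0) (χ k 1) hu1 hu2]
      · rw [trace_phi_proj, bell0_dot, nsq_half]
    · refine ⟨(1/2) * normSq (ψ k 0 * χ k 1 + ψ k 1 * χ k 0), ?_, ?_⟩
      · nlinarith [cs (ψ k 0) (ψ k 1) (χ k 1) (χ k 0) hu1 (by linarith [hu2] : normSq (χ k 1) + normSq (χ k 0) = 1)]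
      · rw [trace_phi_proj, bell2_dot, nsq_half]
  choose t ht htr using key
  have : (Phi i * σ).trace = ((∑ k, p k * t k : ℝ) : ℂ) := by
    rw [hσ, Matrix.mul_sum, Matrix.trace_sum]
    push_cast
    refine Finset.sum_congr rfl fun k _ => ?_
    rw [Matrix.mul_smul, Matrix.trace_smul, htr k, smul_eq_mul]
  rw [this, Complex.ofReal_re]
  calc ∑ k, p k * t k ≤ ∑ k, p k * (1/2) := by
        exact Finset.sum_le_sum fun k _ => mul_le_mul_of_nonneg_left (ht k) (hp k)
  _ = 1/2 := by rw [← Finset.sum_mul, hps, one_mul]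

lemma s2 : (Real.sqrt 2 : ℂ) * (Real.sqrt 2 : ℂ) = 2 := by
  norm_cast; rw [Real.mul_self_sqrt]; norm_num

lemma s2sq : (Real.sqrt 2 : ℂ) ^ 2 = 2 := by rw [sq, s2]

lemma s2four : (Real.sqrt 2 : ℂ) ^ 4 = 4 := by
  rw [show (4:ℕ) = 2 * 2 from rfl, pow_mul, s2sq]; norm_num

lemma tr00 : (Phi 0 * Phi 0).trace = 1 := by
  simp [Matrix.trace, Matrix.mul_apply, Phi, proj, Bell, Fin.sum_univ_four]
  field_simp; norm_num [s2, s2sq, s2four]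

lemma tr22 : (Phi 2 * Phi 2).trace = 1 := by
  simp [Matrix.trace, Matrix.mul_apply, Phi, proj, Bell, Fin.sum_univ_four]
  field_simp; norm_num [s2, s2sq, s2four]

lemma tr02 : (Phi 0 * Phi 2).trace = 0 := by
  simp [Matrix.trace, Matrix.mul_apply, Phi, proj, Bell, Fin.sum_univ_four]

lemma tr20 : (Phi 2 * Phi 0).trace = 0 := by
  simp [Matrix.trace, Matrix.mul_apply, Phi, proj, Bell, Fin.sum_univ_four]

lemma sum_phi : Phi 0 + Phi 1 + Phi 2 + Phi 3 = 1 := by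
  ext i j
  fin_cases i <;> fin_cases j <;>
    simp [Phi, proj, Bell, Matrix.one_apply] <;>
    field_simp <;> norm_num [s2, s2sq, s2four]

lemma tr_phi0 : (Phi 0).trace = 1 := by
  simp [Matrix.trace, Phi, proj, Bell, Fin.sum_univ_four]
  field_simp; norm_num [s2, s2sq, s2four]

lemma tr_ket1 : (proj (ket 1)).trace = 1 := by
  simp [Matrix.trace, proj, ket, Fin.sum_univ_four]

lemma trace_proj_mul (v : Fin 4 → ℂ) (σ : Matrix (Fin 4) (Fin 4) ℂ) :
    (proj v * σ).trace = star v ⬝ᵥ σ *ᵥ v := by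
  simp [Matrix.trace, Matrix.mul_apply, dotProduct, Matrix.mulVec, proj, Fin.sum_univ_four]
  ring

lemma proj_psd (v : Fin 4 → ℂ) : (proj v).PosSemidef := by
  refine Matrix.PosSemidef.of_dotProduct_mulVec_nonneg ?_ ?_
  · ext i j; simp [proj, Matrix.conjTranspose_apply, mul_comm]
  · intro x
    have h0 : star x ⬝ᵥ proj v *ᵥ x = (star x ⬝ᵥ v) * (star v ⬝ᵥ x) := by
      simp [dotProduct, Matrix.mulVec, proj, Fin.sum_univ_four]; ring
    rw [h0]
    have h : (star x ⬝ᵥ v) = starRingEnd ℂ (star v ⬝ᵥ x) := by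
      simp [dotProduct, Fin.sum_univ_four]; ring
    rw [h, ← Complex.normSq_eq_conj_mul_self]
    exact_mod_cast Complex.normSq_nonneg _

lemma trace_phi_mul_nonneg (i : Fin 4) (σ : Matrix (Fin 4) (Fin 4) ℂ) (h : σ.PosSemidef) :
    0 ≤ (Phi i * σ).trace := by
  rw [show Phi i = proj (Bell i) from rfl, trace_proj_mul]
  exact h.dotProduct_mulVec_nonneg (Bell i)

lemma ket1_sep : IsSepState (proj (ket 1)) := by
  refine ⟨1, fun _ => 1, fun _ => ![1, 0], fun _ => ![0, 1], fun _ => zero_le_one,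
    by simp, fun _ => by simp [unit2, Fin.sum_univ_two], fun _ => by simp [unit2, Fin.sum_univ_two], ?_⟩
  have : ket 1 = tens ![1, 0] ![0, 1] := by
    funext j; fin_cases j <;> simp [ket, tens]
  rw [this]
  simp


theorem forced_half_overlaps
    (Λ : Matrix (Fin 4) (Fin 4) ℂ →ₗ[ℂ] Matrix (Fin 4) (Fin 4) ℂ)
    (htr : ∀ ρ, (Λ ρ).trace = ρ.trace)
    (hpos : ∀ ρ, ρ.PosSemidef → (Λ ρ).PosSemidef)
    (hne : ∀ ρ, IsSepState ρ → IsSepState (Λ ρ))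
    (l : ℝ) (hl : 1 / 2 < l) (hl1 : l < 1)
    (heq : (l : ℂ) • Λ (Phi 0) + ((1 - l : ℝ) : ℂ) • Λ (proj (ket 1))
      = (l : ℂ) • Phi 0 + ((1 - l : ℝ) : ℂ) • Phi 2) :
    (Phi 0 * Λ (proj (ket 1))).trace = 1 / 2
      ∧ (Phi 2 * Λ (proj (ket 1))).trace = 1 / 2 := by
  set A := Λ (Phi 0) with hAdef
  set B := Λ (proj (ket 1)) with hBdef
  have hA : A.PosSemidef := hpos _ (proj_psd (Bell 0))
  have hB : B.PosSemidef := hpos _ (proj_psd (ket 1))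
  -- nonnegativity / reality of the six traces
  have hnn : ∀ i : Fin 4, ∀ σ, σ.PosSemidef →
      (Phi i * σ).trace = (((Phi i * σ).trace.re : ℝ) : ℂ) ∧ 0 ≤ (Phi i * σ).trace.re := by
    intro i σ hσ
    have h := trace_phi_mul_nonneg i σ hσ
    rw [Complex.le_def] at h
    simp only [Complex.zero_re, Complex.zero_im] at h
    exact ⟨Complex.ext rfl (by simp [h.2.symm]), h.1⟩
  set a1 := (Phi 0 * A).trace.re
  set a3 := (Phi 2 * A).trace.re
  set b1 := (Phi 0 * B).trace.re
  set b3 := (Phi 2 * B).trace.re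
  have ha1 := hnn 0 A hA; have ha3 := hnn 2 A hA
  have hb1 := hnn 0 B hB; have hb3 := hnn 2 B hB
  have hc1 := hnn 1 A hA; have hc3 := hnn 3 A hA
  -- separability bounds
  have hBsep : IsSepState B := hne _ ket1_sep
  have hsb1 : b1 ≤ 1/2 := sep_bound B hBsep 0 (Or.inl rfl)
  have hsb3 : b3 ≤ 1/2 := sep_bound B hBsep 2 (Or.inr rfl)
  -- trace equations from heq
  have e1 : (l : ℂ) * (Phi 0 * A).trace + ((1 - l : ℝ) : ℂ) * (Phi 0 * B).trace = (l : ℂ) := by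
    have := congrArg (fun M => (Phi 0 * M).trace) heq
    simpa [Matrix.mul_add, Matrix.mul_smul, Matrix.trace_add, Matrix.trace_smul,
      smul_eq_mul, tr00, tr02] using this
  have e2 : (l : ℂ) * (Phi 2 * A).trace + ((1 - l : ℝ) : ℂ) * (Phi 2 * B).trace
      = ((1 - l : ℝ) : ℂ) := by
    have := congrArg (fun M => (Phi 2 * M).trace) heq
    simpa [Matrix.mul_add, Matrix.mul_smul, Matrix.trace_add, Matrix.trace_smul,
      smul_eq_mul, tr20, tr22] using this
  -- real versions
  have e1r : l * a1 + (1 - l) * b1 = l := by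
    rw [ha1.1, hb1.1] at e1; exact_mod_cast e1
  have e2r : l * a3 + (1 - l) * b3 = 1 - l := by
    rw [ha3.1, hb3.1] at e2; exact_mod_cast e2
  -- a1 + a3 ≤ 1
  have htrA : (Phi 0 * A).trace + (Phi 1 * A).trace + (Phi 2 * A).trace + (Phi 3 * A).trace
      = 1 := by
    have : ((Phi 0 + Phi 1 + Phi 2 + Phi 3) * A).trace = A.trace := by rw [sum_phi, one_mul]
    rw [Matrix.add_mul, Matrix.add_mul, Matrix.add_mul, Matrix.trace_add, Matrix.trace_add,
      Matrix.trace_add] at this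
    rw [this, hAdef, htr, tr_phi0]
  have hsum : a1 + a3 ≤ 1 := by
    rw [ha1.1, hc1.1, ha3.1, hc3.1] at htrA
    have : a1 + (Phi 1 * A).trace.re + a3 + (Phi 3 * A).trace.re = 1 := by exact_mod_cast htrA
    linarith [hc1.2, hc3.2]
  -- solve
  have hb1e : b1 = 1/2 := by nlinarith
  have hb3e : b3 = 1/2 := by nlinarith
  constructor
  · rw [hb1.1, show (Phi 0 * B).trace.re = b1 from rfl, hb1e]; norm_num
  · rw [hb3.1, show (Phi 2 * B).trace.re = b3 from rfl, hb3e]; norm_num
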